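/- arXiv:1004.2744 — 2 statements merged into one kernel-verified Lean document; each statement's English description precedes it below -/
import Mathlib

section
/- Let Γ: (0,∞)×ℝ → ℝ be measurable and let f: (0,∞)×ℝ → [0,∞] be jointly measurable. Then for every σ-finite Borel measure η on ℝ and every β > 0, ∫₀^∞ e^{−βt} sup_{z∈ℝ} ∫_ℝ η(dx) ∫₀^t ∫_ℝ [Γ_{t−s}(x−z−y)]² f(s,y) dy ds dt ≤ ( ∫₀^∞ e^{−βt} ‖Γ_t‖²_{L²(ℝ)} dt ) · ( ∫₀^∞ e^{−βs} sup_{v∈ℝ} ∫_ℝ η(dx) f(s, x−v) ds ), where both sides are allowed to take the value +∞. -/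
open MeasureTheory Real Set Filter
open scoped ENNReal Topology

lemma my_iSup_min_nat (a : ℝ≥0∞) : ⨆ n : ℕ, min a n = a := by
  apply le_antisymm (iSup_le fun n => min_le_left _ _)
  rcases eq_or_ne a ∞ with rfl | ha
  · have : ∀ n : ℕ, min (∞ : ℝ≥0∞) n = n := fun n => min_eq_right le_top
    simp only [this]
    exact le_of_eq (ENNReal.iSup_natCast).symm
  · obtain ⟨n, hn⟩ := ENNReal.exists_nat_gt ha
    exact le_iSup_of_le n (le_min le_rfl hn.le)

lemma my_iSup_mul_iSup {a b : ℕ → ℝ≥0∞} (ha : Monotone a) (hb : Monotone b) :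
    (⨆ n, a n) * (⨆ n, b n) = ⨆ n, a n * b n := by
  rw [ENNReal.iSup_mul]
  apply le_antisymm
  · refine iSup_le fun i => ?_
    rw [ENNReal.mul_iSup]
    refine iSup_le fun j => ?_
    exact le_iSup_of_le (max i j) (mul_le_mul' (ha (le_max_left i j)) (hb (le_max_right i j)))
  · exact iSup_le fun n => le_iSup_of_le n (mul_le_mul' le_rfl (le_iSup _ n))

lemma my_shift (c : ℝ) (h : ℝ → ℝ≥0∞) (hh : Measurable h) :
    ∫⁻ x in Ioi c, h x = ∫⁻ x in Ioi (0:ℝ), h (x + c) := by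
  have hmp : MeasurePreserving (fun x : ℝ => x + c) volume volume :=
    measurePreserving_add_right volume c
  have hpre : (fun x : ℝ => x + c) ⁻¹' (Ioi c) = Ioi 0 := by
    ext x; simp [Set.mem_Ioi]
  have := (hmp.restrict_preimage (measurableSet_Ioi (a := c))).lintegral_comp hh
  rw [hpre] at this
  exact this.symm

lemma my_reflect (c : ℝ) (h : ℝ → ℝ≥0∞) (hh : Measurable h) :
    ∫⁻ y, h (c - y) = ∫⁻ y, h y := by
  exact (Measure.measurePreserving_sub_left volume c).lintegral_comp hh

lemma my_key_final {α : Type*} [MeasurableSpace α] (ρ : Measure α) [SigmaFinite ρ]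
    (kern : α → ℝ≥0∞) (hk : Measurable kern)
    (T : ℝ → α → ℝ≥0∞) (hT : Measurable (Function.uncurry T))
    (F : ℝ → ℝ≥0∞) (hTF : ∀ s a, T s a ≤ F s)
    (w : ℝ → ℝ≥0∞) (hw : Measurable w) :
    ∫⁻ s in Ioi (0:ℝ), w s * ∫⁻ a, kern a * T s a ∂ρ ≤
      (∫⁻ a, kern a ∂ρ) * ∫⁻ s in Ioi (0:ℝ), w s * F s := by
  set kn : ℕ → α → ℝ≥0∞ := fun n a => min (kern a) n * (spanningSets ρ n).indicator 1 a with hkn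
  have hknmeas : ∀ n, Measurable (kn n) := fun n =>
    (hk.min measurable_const).mul
      ((measurable_const.indicator (measurableSet_spanningSets ρ n)))
  have hknmono : Monotone kn := by
    intro m n hmn a
    exact mul_le_mul' (min_le_min le_rfl (by exact_mod_cast Nat.cast_le.2 hmn))
      (Set.indicator_le_indicator_of_subset (monotone_spanningSets ρ hmn) (by simp) a)
  have hknsup : ∀ a, (⨆ n, kn n a) = kern a := by
    intro a
    have h1 : Monotone fun n : ℕ => min (kern a) (n : ℝ≥0∞) :=
      fun m n hmn => min_le_min le_rfl (by exact_mod_cast Nat.cast_le.2 hmn)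
    have h2 : Monotone fun n : ℕ => (spanningSets ρ n).indicator (1 : α → ℝ≥0∞) a :=
      fun m n hmn => Set.indicator_le_indicator_of_subset (monotone_spanningSets ρ hmn) (by simp) a
    rw [← my_iSup_mul_iSup h1 h2, my_iSup_min_nat]
    have : (⨆ n, (spanningSets ρ n).indicator (1 : α → ℝ≥0∞) a) = 1 := by
      obtain ⟨m, hm⟩ : ∃ m, a ∈ spanningSets ρ m := by
        have := iUnion_spanningSets ρ
        have ha : a ∈ ⋃ i, spanningSets ρ i := by rw [this]; trivial
        exact mem_iUnion.mp ha
      refine le_antisymm (iSup_le fun n => Set.indicator_le_self' (by simp) a) ?_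
      · exact le_iSup_of_le m (by simp [Set.indicator_of_mem hm])
    rw [this, mul_one]
  set Cn : ℕ → ℝ≥0∞ := fun n => ∫⁻ a, kn n a ∂ρ with hCn
  have hCn_fin : ∀ n, Cn n ≠ ∞ := by
    intro n
    have hb : ∀ a, kn n a ≤ (spanningSets ρ n).indicator (fun _ => (n : ℝ≥0∞)) a := by
      intro a
      by_cases ha : a ∈ spanningSets ρ n
      · simp [hkn, Set.indicator_of_mem ha, min_le_right]
      · simp [hkn, Set.indicator_of_notMem ha]
    refine ne_of_lt (lt_of_le_of_lt (lintegral_mono hb) ?_)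
    rw [lintegral_indicator_const (measurableSet_spanningSets ρ n)]
    exact ENNReal.mul_lt_top (by simp) (measure_spanningSets_lt_top ρ n)
  have hCn_le : ∀ n, Cn n ≤ ∫⁻ a, kern a ∂ρ := by
    intro n
    refine lintegral_mono fun a => ?_
    calc kn n a ≤ min (kern a) n * 1 :=
          mul_le_mul' le_rfl (Set.indicator_le_self' (by simp) a)
      _ ≤ kern a := by rw [mul_one]; exact min_le_left _ _
  set Rn : ℕ → ℝ → ℝ≥0∞ := fun n s => ∫⁻ a, kn n a * T s a ∂ρ with hRn
  have hRnmeas : ∀ n, Measurable (Rn n) := by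
    intro n
    exact Measurable.lintegral_prod_right
      (((hknmeas n).comp measurable_snd).mul hT)
  have hRmeas : Measurable fun s => ∫⁻ a, kern a * T s a ∂ρ :=
    Measurable.lintegral_prod_right ((hk.comp measurable_snd).mul hT)
  have hRsup : ∀ s, (∫⁻ a, kern a * T s a ∂ρ) = ⨆ n, Rn n s := by
    intro s
    calc ∫⁻ a, kern a * T s a ∂ρ = ∫⁻ a, ⨆ n, kn n a * T s a ∂ρ := by
          congr 1
          ext a
          rw [← ENNReal.iSup_mul, hknsup]
      _ = ⨆ n, Rn n s :=
          lintegral_iSup (fun n => (hknmeas n).mul (hT.comp measurable_prodMk_left))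
            (fun m n hmn a => mul_le_mul' (hknmono hmn a) le_rfl)
  calc ∫⁻ s in Ioi (0:ℝ), w s * ∫⁻ a, kern a * T s a ∂ρ
      = ∫⁻ s in Ioi (0:ℝ), ⨆ n, w s * Rn n s := by
        refine lintegral_congr fun s => ?_
        rw [hRsup s, ENNReal.mul_iSup]
    _ = ⨆ n, ∫⁻ s in Ioi (0:ℝ), w s * Rn n s := by
        refine lintegral_iSup (fun n => hw.mul (hRnmeas n)) ?_
        intro m n hmn s
        exact mul_le_mul' le_rfl (lintegral_mono fun a => mul_le_mul' (hknmono hmn a) le_rfl)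
    _ ≤ (∫⁻ a, kern a ∂ρ) * ∫⁻ s in Ioi (0:ℝ), w s * F s := by
        refine iSup_le fun n => ?_
        rcases eq_or_ne (Cn n) 0 with hCn0 | hCn0
        · have hknae : kn n =ᵐ[ρ] 0 := (lintegral_eq_zero_iff (hknmeas n)).mp hCn0
          have hRn0 : ∀ s, Rn n s = 0 := by
            intro s
            have h0 : (fun a => kn n a * T s a) =ᵐ[ρ] 0 := by
              filter_upwards [hknae] with a ha
              simp [ha]
            show ∫⁻ a, kn n a * T s a ∂ρ = 0
            rw [lintegral_congr_ae h0]
            simp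
          simp only [hRn0, mul_zero, lintegral_zero]
          exact zero_le
        · have hRnF : ∀ s, Rn n s ≤ Cn n * F s := by
            intro s
            calc Rn n s ≤ ∫⁻ a, kn n a * F s ∂ρ :=
                  lintegral_mono fun a => mul_le_mul' le_rfl (hTF s a)
              _ = Cn n * F s := by rw [lintegral_mul_const _ (hknmeas n)]
          have hpt : ∀ s, (Cn n)⁻¹ * (w s * Rn n s) ≤ w s * F s := by
            intro s
            calc (Cn n)⁻¹ * (w s * Rn n s) ≤ (Cn n)⁻¹ * (Cn n * (w s * F s)) := by
                  refine mul_le_mul' le_rfl ?_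
                  calc w s * Rn n s ≤ w s * (Cn n * F s) := mul_le_mul' le_rfl (hRnF s)
                    _ = Cn n * (w s * F s) := by ring
              _ = w s * F s := by
                  rw [← mul_assoc, ENNReal.inv_mul_cancel hCn0 (hCn_fin n), one_mul]
          have hint : (Cn n)⁻¹ * ∫⁻ s in Ioi (0:ℝ), w s * Rn n s ≤
              ∫⁻ s in Ioi (0:ℝ), w s * F s := by
            rw [← lintegral_const_mul' _ _ (ENNReal.inv_ne_top.mpr hCn0)]
            exact lintegral_mono hpt
          calc ∫⁻ s in Ioi (0:ℝ), w s * Rn n s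
              = Cn n * ((Cn n)⁻¹ * ∫⁻ s in Ioi (0:ℝ), w s * Rn n s) := by
                rw [← mul_assoc, ENNReal.mul_inv_cancel hCn0 (hCn_fin n), one_mul]
            _ ≤ Cn n * ∫⁻ s in Ioi (0:ℝ), w s * F s := mul_le_mul' le_rfl hint
            _ ≤ (∫⁻ a, kern a ∂ρ) * ∫⁻ s in Ioi (0:ℝ), w s * F s :=
                mul_le_mul' (hCn_le n) le_rfl

lemma my_cont_sup (k H : ℝ × ℝ → ℝ≥0∞) (hk : Measurable k) (hH : Measurable H) (z : ℝ) :
    (∫⁻ p : ℝ × ℝ, k p * H (p.1, p.2 + z)) ≤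
      ⨆ q : ℚ, ∫⁻ p : ℝ × ℝ, k p * H (p.1, p.2 + (q : ℝ)) := by
  set M : ℝ → ℝ≥0∞ := fun y => ∫⁻ p : ℝ × ℝ, k p * H (p.1, p.2 + y) with hM
  set S : ℝ≥0∞ := ⨆ q : ℚ, M (q : ℝ) with hS
  show M z ≤ S
  -- truncations
  set kn : ℕ → ℝ × ℝ → ℝ≥0∞ :=
    fun n p => min (k p) n * (Metric.closedBall (0 : ℝ × ℝ) n).indicator 1 p with hkn
  set Hn : ℕ → ℝ × ℝ → ℝ≥0∞ := fun n p => min (H p) n with hHn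
  have hknm : ∀ n, Measurable (kn n) := fun n =>
    (hk.min measurable_const).mul
      (measurable_const.indicator Metric.isClosed_closedBall.measurableSet)
  have hHnm : ∀ n, Measurable (Hn n) := fun n => hH.min measurable_const
  have hHn_top : ∀ n p, Hn n p ≠ ∞ := fun n p =>
    ((min_le_right _ _).trans_lt (ENNReal.coe_lt_top (r := n))).ne
  have hHn_le : ∀ n p, Hn n p ≤ H p := fun n p => min_le_left _ _
  have hHn_len : ∀ n p, Hn n p ≤ (n : ℝ≥0∞) := fun n p => min_le_right _ _
  have hkn_le : ∀ n p, kn n p ≤ k p := by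
    intro n p
    calc kn n p ≤ min (k p) n * 1 :=
          mul_le_mul' le_rfl (Set.indicator_le_self' (by simp) p)
      _ ≤ k p := by rw [mul_one]; exact min_le_left _ _
  have hkn_ind : ∀ n p, kn n p ≤
      (Metric.closedBall (0 : ℝ × ℝ) n).indicator (fun _ => (n : ℝ≥0∞)) p := by
    intro n p
    by_cases hp : p ∈ Metric.closedBall (0 : ℝ × ℝ) n
    · simp only [hkn, Set.indicator_of_mem hp, Pi.one_apply, mul_one]
      exact min_le_right _ _
    · simp [hkn, Set.indicator_of_notMem hp]
  have hkn_len : ∀ n p, kn n p ≤ (n : ℝ≥0∞) := by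
    intro n p
    refine (hkn_ind n p).trans ?_
    exact Set.indicator_le' (fun _ _ => le_rfl) (fun _ _ => zero_le) p
  have hkn_top : ∀ n p, kn n p ≠ ∞ := fun n p =>
    ((hkn_len n p).trans_lt (ENNReal.coe_lt_top (r := n))).ne
  -- supremum of truncations
  have hsup : ∀ y : ℝ, M y = ⨆ n, ∫⁻ p : ℝ × ℝ, kn n p * Hn n (p.1, p.2 + y) := by
    intro y
    have hmono : Monotone fun n (p : ℝ × ℝ) => kn n p * Hn n (p.1, p.2 + y) := by
      intro m n hmn p
      refine mul_le_mul' (mul_le_mul' (min_le_min le_rfl ?_) ?_) (min_le_min le_rfl ?_)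
      · exact_mod_cast Nat.cast_le.2 hmn
      · exact Set.indicator_le_indicator_of_subset
          (Metric.closedBall_subset_closedBall (by exact_mod_cast Nat.cast_le.2 hmn)) (by simp) p
      · exact_mod_cast Nat.cast_le.2 hmn
    have hFm : ∀ m : ℕ, Measurable fun p : ℝ × ℝ => kn m p * Hn m (p.1, p.2 + y) :=
      fun m => (hknm m).mul ((hHnm m).comp
        (measurable_fst.prodMk (measurable_snd.add_const y)))
    rw [← lintegral_iSup hFm hmono]
    refine lintegral_congr fun p => ?_
    have h3 : Monotone fun n : ℕ => min (k p) (n : ℝ≥0∞) := fun m n' hmn =>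
      min_le_min le_rfl (by exact_mod_cast Nat.cast_le.2 hmn)
    have h4 : Monotone fun n : ℕ =>
        (Metric.closedBall (0 : ℝ × ℝ) n).indicator (1 : ℝ × ℝ → ℝ≥0∞) p := fun m n' hmn =>
      Set.indicator_le_indicator_of_subset
        (Metric.closedBall_subset_closedBall (by exact_mod_cast Nat.cast_le.2 hmn)) (by simp) p
    have h1 : Monotone fun n : ℕ => kn n p := fun m n' hmn =>
      mul_le_mul' (h3 hmn) (h4 hmn)
    have h2 : Monotone fun n : ℕ => Hn n (p.1, p.2 + y) := fun m n' hmn =>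
      min_le_min le_rfl (by exact_mod_cast Nat.cast_le.2 hmn)
    have hind : (⨆ n' : ℕ, (Metric.closedBall (0 : ℝ × ℝ) n').indicator
        (1 : ℝ × ℝ → ℝ≥0∞) p) = 1 := by
      obtain ⟨m, hm⟩ := exists_nat_ge ‖p‖
      refine le_antisymm (iSup_le fun n' => Set.indicator_le_self' (by simp) p) ?_
      refine le_iSup_of_le m ?_
      rw [Set.indicator_of_mem (by simpa [Metric.mem_closedBall, dist_zero_right] using hm)]
      simp
    have hsupk : (⨆ n' : ℕ, kn n' p) = k p := by
      simp only [hkn]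
      rw [← my_iSup_mul_iSup h3 h4, my_iSup_min_nat, hind, mul_one]
    have hsupH : (⨆ n' : ℕ, Hn n' (p.1, p.2 + y)) = H (p.1, p.2 + y) := by
      simp only [hHn]
      exact my_iSup_min_nat _
    rw [← hsupk, ← hsupH, my_iSup_mul_iSup h1 h2]
  rw [hsup z]
  refine iSup_le fun n => ?_
  -- now fixed n; prove by epsilon approximation
  refine ENNReal.le_of_forall_pos_le_add fun ε' hε' _ => ?_
  set D : ℝ≥0∞ := ((2 * (n + 1) : ℕ) : ℝ≥0∞) with hD
  have hD0 : D ≠ 0 := by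
    rw [hD]
    positivity
  have hDtop : D ≠ ∞ := by rw [hD]; exact ENNReal.natCast_ne_top _
  set ε : ℝ≥0∞ := (ε' : ℝ≥0∞) / D with hε
  have hε0 : ε ≠ 0 := by
    simp only [hε, ne_eq, ENNReal.div_eq_zero_iff, hDtop, or_false]
    exact_mod_cast hε'.ne'
  -- integrable real version of kn n
  set knR : ℝ × ℝ → ℝ := fun p => (kn n p).toReal with hknR
  have hknR_nonneg : ∀ p, 0 ≤ knR p := fun p => ENNReal.toReal_nonneg
  have hknR_meas : Measurable knR := (hknm n).ennreal_toReal
  have hknR_int : Integrable knR (volume : Measure (ℝ × ℝ)) := by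
    constructor
    · exact hknR_meas.aestronglyMeasurable
    · show (∫⁻ p, (‖knR p‖₊ : ℝ≥0∞) ∂(volume : Measure (ℝ × ℝ))) < ⊤
      have hb : ∀ p, (‖knR p‖₊ : ℝ≥0∞) ≤
          (Metric.closedBall (0 : ℝ × ℝ) n).indicator (fun _ => (n : ℝ≥0∞)) p := by
        intro p
        calc (‖knR p‖₊ : ℝ≥0∞) = ENNReal.ofReal (knR p) := by
              show ‖knR p‖ₑ = _
              rw [Real.enorm_eq_ofReal_abs, abs_of_nonneg (hknR_nonneg p)]
          _ ≤ kn n p := ENNReal.ofReal_toReal_le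
          _ ≤ _ := hkn_ind n p
      refine lt_of_le_of_lt (lintegral_mono hb) ?_
      rw [lintegral_indicator_const Metric.isClosed_closedBall.measurableSet]
      exact ENNReal.mul_lt_top (by simp) (measure_closedBall_lt_top)
  obtain ⟨c, hc_supp, hc_close, hc_cont, _⟩ :=
    hknR_int.exists_hasCompactSupport_lintegral_sub_le hε0
  set creal : ℝ × ℝ → ℝ := fun p => max (c p) 0 with hcreal
  have hcreal_cont : Continuous creal := hc_cont.max continuous_const
  have hcreal_supp : HasCompactSupport creal :=
    hc_supp.comp_left (g := fun r : ℝ => max r 0) (by simp)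
  have hcreal_nonneg : ∀ p, 0 ≤ creal p := fun p => le_max_right _ _
  set cE : ℝ × ℝ → ℝ≥0∞ := fun p => ENNReal.ofReal (creal p) with hcE
  set dE : ℝ × ℝ → ℝ≥0∞ := fun p => ENNReal.ofReal |knR p - c p| with hdE
  have hcE_meas : Measurable cE := hcreal_cont.measurable.ennreal_ofReal
  have hdE_meas : Measurable dE := (hknR_meas.sub hc_cont.measurable).abs.ennreal_ofReal
  have hdE_int : ∫⁻ p, dE p ≤ ε := by
    refine le_trans (le_of_eq (lintegral_congr fun p => ?_)) hc_close
    rw [hdE, Real.enorm_eq_ofReal_abs]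
  have hknE : ∀ p, kn n p = ENNReal.ofReal (knR p) := fun p =>
    (ENNReal.ofReal_toReal (hkn_top n p)).symm
  have hk_le : ∀ p, kn n p ≤ cE p + dE p := by
    intro p
    rw [hknE p, hcE, hdE, ← ENNReal.ofReal_add (hcreal_nonneg p) (abs_nonneg _)]
    refine ENNReal.ofReal_le_ofReal ?_
    have h1 := le_abs_self (knR p - c p)
    have h2 := le_max_left (c p) 0
    simp only [hcreal]
    linarith
  have hc_le : ∀ p, cE p ≤ kn n p + dE p := by
    intro p
    rw [hknE p, hcE, hdE, ← ENNReal.ofReal_add (hknR_nonneg p) (abs_nonneg _)]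
    refine ENNReal.ofReal_le_ofReal ?_
    have h1 := neg_abs_le (knR p - c p)
    refine max_le (by linarith) (by positivity)
  -- the auxiliary continuous-kernel functional
  set Cc : ℝ → ℝ≥0∞ := fun y => ∫⁻ p : ℝ × ℝ, cE p * Hn n (p.1, p.2 + y) with hCc
  have hHn_meas_y : ∀ y : ℝ, Measurable fun p : ℝ × ℝ => Hn n (p.1, p.2 + y) := fun y =>
    (hHnm n).comp (measurable_fst.prodMk (measurable_snd.add_const y))
  have hdEHn : ∀ y : ℝ, ∫⁻ p : ℝ × ℝ, dE p * Hn n (p.1, p.2 + y) ≤ ε * n := by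
    intro y
    calc ∫⁻ p : ℝ × ℝ, dE p * Hn n (p.1, p.2 + y)
        ≤ ∫⁻ p : ℝ × ℝ, dE p * n :=
          lintegral_mono fun p => mul_le_mul' le_rfl (hHn_len n _)
      _ = (∫⁻ p, dE p) * n := lintegral_mul_const _ hdE_meas
      _ ≤ ε * n := mul_le_mul' hdE_int le_rfl
  have hMn_le : ∫⁻ p : ℝ × ℝ, kn n p * Hn n (p.1, p.2 + z) ≤ Cc z + ε * n := by
    calc ∫⁻ p : ℝ × ℝ, kn n p * Hn n (p.1, p.2 + z)
        ≤ ∫⁻ p : ℝ × ℝ, (cE p * Hn n (p.1, p.2 + z) + dE p * Hn n (p.1, p.2 + z)) := by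
          refine lintegral_mono fun p => ?_
          rw [← add_mul]
          exact mul_le_mul' (hk_le p) le_rfl
      _ = Cc z + ∫⁻ p : ℝ × ℝ, dE p * Hn n (p.1, p.2 + z) :=
          lintegral_add_left (hcE_meas.mul (hHn_meas_y z)) _
      _ ≤ Cc z + ε * n := add_le_add_right (hdEHn z) _
  have hCc_le : ∀ q : ℚ, Cc (q : ℝ) ≤ S + ε * n := by
    intro q
    calc Cc (q : ℝ)
        ≤ ∫⁻ p : ℝ × ℝ, (kn n p * Hn n (p.1, p.2 + (q : ℝ)) +
            dE p * Hn n (p.1, p.2 + (q : ℝ))) := by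
          refine lintegral_mono fun p => ?_
          rw [← add_mul]
          exact mul_le_mul' (hc_le p) le_rfl
      _ = (∫⁻ p : ℝ × ℝ, kn n p * Hn n (p.1, p.2 + (q : ℝ))) +
            ∫⁻ p : ℝ × ℝ, dE p * Hn n (p.1, p.2 + (q : ℝ)) :=
          lintegral_add_left ((hknm n).mul (hHn_meas_y _)) _
      _ ≤ M (q : ℝ) + ε * n := by
          refine add_le_add ?_ (hdEHn _)
          exact lintegral_mono fun p => mul_le_mul' (hkn_le n p) (hHn_le n _)
      _ ≤ S + ε * n := add_le_add_left (le_iSup (fun q : ℚ => M (q : ℝ)) q) _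
  -- rational sequence tending to z
  have hq : ∀ j : ℕ, ∃ q : ℚ, z < (q : ℝ) ∧ (q : ℝ) < z + 1 / (j + 1) := by
    intro j
    refine exists_rat_btwn ?_
    have : (0 : ℝ) < 1 / ((j : ℝ) + 1) := by positivity
    linarith
  choose q hq1 hq2 using hq
  have htend : Tendsto (fun j => ((q j : ℝ))) atTop (𝓝 z) := by
    have h1 : Tendsto (fun j : ℕ => z + 1 / ((j : ℝ) + 1)) atTop (𝓝 z) := by
      have : Tendsto (fun n : ℕ => 1 / ((n : ℝ) + 1)) atTop (𝓝 0) :=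
        tendsto_one_div_add_atTop_nhds_zero_nat
      simpa using tendsto_const_nhds.add this
    exact tendsto_of_tendsto_of_tendsto_of_le_of_le tendsto_const_nhds h1
      (fun j => (hq1 j).le) (fun j => (hq2 j).le)
  -- rewrite Cc via translation invariance
  have hpair : ∀ (y : ℝ) (x : ℝ × ℝ), x + ((0 : ℝ), y) = (x.1, x.2 + y) := by
    intro y x
    ext <;> simp
  have hCc_eq : ∀ y : ℝ, Cc y = ∫⁻ p : ℝ × ℝ, cE (p.1, p.2 - y) * Hn n p := by
    intro y
    have h := lintegral_add_right_eq_self (μ := (volume : Measure (ℝ × ℝ)))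
      (fun p : ℝ × ℝ => cE (p.1, p.2 - y) * Hn n p) ((0 : ℝ), y)
    simp only [hpair y, add_sub_cancel_right, Prod.mk.eta] at h
    exact h
  -- dominated convergence
  obtain ⟨p₀, hp₀⟩ := hcreal_cont.exists_forall_ge_of_hasCompactSupport hcreal_supp
  set Mc : ℝ := creal p₀ with hMc
  obtain ⟨Rc, hRc⟩ := (hcreal_supp.isBounded).subset_closedBall (0 : ℝ × ℝ)
  set RR : ℝ := Rc + |z| + 1 with hRR
  set bound : ℝ × ℝ → ℝ≥0∞ :=
    (Metric.closedBall (0 : ℝ × ℝ) RR).indicator (fun _ => ENNReal.ofReal Mc * n) with hbound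
  have hbound_fin : ∫⁻ p, bound p ≠ ∞ := by
    rw [hbound, lintegral_indicator_const Metric.isClosed_closedBall.measurableSet]
    exact (ENNReal.mul_lt_top (ENNReal.mul_lt_top ENNReal.ofReal_lt_top
      (ENNReal.coe_lt_top (r := n))) measure_closedBall_lt_top).ne
  have hqz_close : ∀ j, |(q j : ℝ) - z| ≤ 1 := by
    intro j
    rw [abs_le]
    constructor
    · linarith [hq1 j]
    · have h2 := hq2 j
      have h3 : 1 / ((j : ℝ) + 1) ≤ 1 := by
        rw [div_le_one (by positivity)]
        simp
      linarith
  have h_bound : ∀ j, (fun p : ℝ × ℝ => cE (p.1, p.2 - (q j : ℝ)) * Hn n p)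
      ≤ᵐ[(volume : Measure (ℝ × ℝ))] bound := by
    intro j
    refine Filter.Eventually.of_forall fun p => ?_
    by_cases hp : p ∈ Metric.closedBall (0 : ℝ × ℝ) RR
    · rw [hbound, Set.indicator_of_mem hp]
      refine mul_le_mul' ?_ (hHn_len n p)
      exact ENNReal.ofReal_le_ofReal (hp₀ _)
    · have hz : creal (p.1, p.2 - (q j : ℝ)) = 0 := by
        by_contra hne
        have hmem : (p.1, p.2 - (q j : ℝ)) ∈ tsupport creal :=
          subset_closure (by simpa [Function.mem_support] using hne)
        have hnorm := Metric.mem_closedBall.mp (hRc hmem)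
        rw [dist_zero_right, Prod.norm_def] at hnorm
        have h1 : |p.1| ≤ Rc := le_trans (le_max_left _ _) hnorm
        have h2 : |p.2 - (q j : ℝ)| ≤ Rc := le_trans (le_max_right _ _) hnorm
        have h3 : |p.2| ≤ Rc + 1 + |z| := by
          have := abs_sub_abs_le_abs_sub p.2 ((q j : ℝ))
          have h4 : |(q j : ℝ)| ≤ |z| + 1 := by
            have := hqz_close j
            have := abs_sub_abs_le_abs_sub ((q j : ℝ)) z
            linarith
          linarith
        apply hp
        rw [Metric.mem_closedBall, dist_zero_right, Prod.norm_def]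
        have hz0 := abs_nonneg z
        refine max_le (by rw [Real.norm_eq_abs]; linarith) (by rw [Real.norm_eq_abs]; linarith)
      rw [hcE]
      simp only [hz, ENNReal.ofReal_zero, zero_mul]
      exact zero_le
  have h_lim : ∀ p : ℝ × ℝ, Tendsto (fun j => cE (p.1, p.2 - (q j : ℝ)) * Hn n p) atTop
      (𝓝 (cE (p.1, p.2 - z) * Hn n p)) := by
    intro p
    refine ENNReal.Tendsto.mul_const ?_ (Or.inr (hHn_top n p))
    refine (ENNReal.continuous_ofReal.tendsto _).comp ?_
    refine (hcreal_cont.tendsto _).comp ?_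
    exact tendsto_const_nhds.prodMk_nhds (tendsto_const_nhds.sub htend)
  have hDCT : Tendsto (fun j => Cc ((q j : ℝ))) atTop (𝓝 (Cc z)) := by
    simp only [hCc_eq]
    exact tendsto_lintegral_of_dominated_convergence bound
      (fun j => (hcE_meas.comp (measurable_fst.prodMk (measurable_snd.sub_const _))).mul (hHnm n))
      h_bound hbound_fin (Filter.Eventually.of_forall h_lim)
  have hCcz_le : Cc z ≤ S + ε * n :=
    le_of_tendsto hDCT (Filter.Eventually.of_forall fun j => hCc_le (q j))
  -- put it together
  calc ∫⁻ p : ℝ × ℝ, kn n p * Hn n (p.1, p.2 + z)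
      ≤ Cc z + ε * n := hMn_le
    _ ≤ (S + ε * n) + ε * n := add_le_add_left hCcz_le _
    _ ≤ S + ε' := by
        rw [add_assoc]
        refine add_le_add_right ?_ S
        have hcalc : ε * n + ε * n ≤ ε * D := by
          rw [hD]
          push_cast
          calc ε * n + ε * n ≤ ε * (n + 1) + ε * (n + 1) := by
                gcongr <;> exact le_self_add
            _ = ε * (2 * ((n : ℝ≥0∞) + 1)) := by ring
          
        refine hcalc.trans ?_
        rw [hε, ENNReal.div_mul_cancel hD0 hDtop]

/-- **Deterministic core of the stochastic Young inequality.**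
For measurable `Γ : (0,∞) × ℝ → ℝ` and jointly measurable `f : (0,∞) × ℝ → [0,∞]`,
for every σ-finite Borel measure `η` on `ℝ` and every `β > 0`, the weighted-in-time,
translation-uniform `η`-average of the space-time convolution of `Γ²` with `f` is bounded
by the product of the Laplace-type transform of `t ↦ ‖Γ_t‖²_{L²(ℝ)}` and the corresponding
weighted norm of `f`. Both sides take values in `[0,∞]`. -/
theorem deterministic_stochastic_young
    (Γ : ℝ → ℝ → ℝ) (f : ℝ → ℝ → ℝ≥0∞)
    (hΓ : Measurable fun p : ℝ × ℝ => Γ p.1 p.2)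
    (hf : Measurable fun p : ℝ × ℝ => f p.1 p.2)
    (η : Measure ℝ) [SigmaFinite η] (β : ℝ) (hβ : 0 < β) :
    ∫⁻ t in Ioi (0 : ℝ), ENNReal.ofReal (exp (-β * t)) *
        ⨆ z : ℝ, ∫⁻ x, (∫⁻ s in Ioo (0 : ℝ) t, ∫⁻ y,
          ENNReal.ofReal ((Γ (t - s) (x - z - y)) ^ 2) * f s y) ∂η
      ≤ (∫⁻ t in Ioi (0 : ℝ), ENNReal.ofReal (exp (-β * t)) *
            ∫⁻ y, ENNReal.ofReal ((Γ t y) ^ 2)) *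
        (∫⁻ s in Ioi (0 : ℝ), ENNReal.ofReal (exp (-β * s)) *
            ⨆ v : ℝ, ∫⁻ x, f s (x - v) ∂η) := by
  have hg2 : Measurable fun p : ℝ × ℝ => ENNReal.ofReal (Γ p.1 p.2 ^ 2) :=
    (hΓ.pow_const 2).ennreal_ofReal
  set e : ℝ → ℝ≥0∞ := fun r => ENNReal.ofReal (exp (-β * r)) with he
  have hemeas : Measurable e := by
    simp only [he]
    exact (Real.measurable_exp.comp (measurable_const.mul measurable_id)).ennreal_ofReal
  set H : ℝ → ℝ → ℝ≥0∞ := fun s v => ∫⁻ x, f s (x - v) ∂η with hH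
  have hHm : Measurable fun p : ℝ × ℝ => H p.1 p.2 := by
    simp only [hH]
    exact Measurable.lintegral_prod_right
      (f := fun (p : ℝ × ℝ) (x : ℝ) => f p.1 (x - p.2))
      (hf.comp ((measurable_fst.comp measurable_fst).prodMk
        (measurable_snd.sub (measurable_snd.comp measurable_fst))))
  set P : ℝ → ℝ → ℝ≥0∞ := fun t z =>
    ∫⁻ s in Ioo (0:ℝ) t, ∫⁻ w, ENNReal.ofReal (Γ (t - s) w ^ 2) * H s (z + w) with hP
  -- Step 1 : Fubini + reflection
  have step1 : ∀ t z : ℝ,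
      (∫⁻ x, (∫⁻ s in Ioo (0:ℝ) t, ∫⁻ y,
        ENNReal.ofReal ((Γ (t - s) (x - z - y)) ^ 2) * f s y) ∂η) = P t z := by
    intro t z
    have hmeas_big : Measurable fun q : ℝ × (ℝ × ℝ) =>
        ENNReal.ofReal (Γ (t - q.2.1) q.2.2 ^ 2) * f q.2.1 (q.1 - z - q.2.2) := by
      apply Measurable.mul
      · exact ((hΓ.comp ((measurable_const.sub (measurable_fst.comp measurable_snd)).prodMk
          (measurable_snd.comp measurable_snd))).pow_const 2).ennreal_ofReal
      · exact hf.comp ((measurable_fst.comp measurable_snd).prodMk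
          ((measurable_fst.sub measurable_const).sub (measurable_snd.comp measurable_snd)))
    have hrefl : ∀ s x : ℝ,
        (∫⁻ y, ENNReal.ofReal ((Γ (t - s) (x - z - y)) ^ 2) * f s y)
          = ∫⁻ w, ENNReal.ofReal (Γ (t - s) w ^ 2) * f s (x - z - w) := by
      intro s x
      have hm : Measurable fun w : ℝ => ENNReal.ofReal (Γ (t - s) w ^ 2) * f s (x - z - w) :=
        (((hΓ.comp (measurable_const.prodMk measurable_id)).pow_const 2).ennreal_ofReal).mul
          (hf.comp (measurable_const.prodMk (measurable_const.sub measurable_id)))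
      have h := (Measure.measurePreserving_sub_left volume (x - z)).lintegral_comp hm
      simp only [sub_sub_cancel] at h
      exact h
    calc (∫⁻ x, (∫⁻ s in Ioo (0:ℝ) t, ∫⁻ y,
          ENNReal.ofReal ((Γ (t - s) (x - z - y)) ^ 2) * f s y) ∂η)
        = ∫⁻ x, (∫⁻ s in Ioo (0:ℝ) t, ∫⁻ w,
            ENNReal.ofReal (Γ (t - s) w ^ 2) * f s (x - z - w)) ∂η :=
          lintegral_congr fun x => lintegral_congr fun s => hrefl s x
      _ = ∫⁻ x, (∫⁻ p, ENNReal.ofReal (Γ (t - p.1) p.2 ^ 2) * f p.1 (x - z - p.2)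
            ∂((volume.restrict (Ioo (0:ℝ) t)).prod volume)) ∂η := by
          refine lintegral_congr fun x => (lintegral_prod
            (fun p : ℝ × ℝ => ENNReal.ofReal (Γ (t - p.1) p.2 ^ 2) * f p.1 (x - z - p.2))
            ?_).symm
          exact (hmeas_big.comp (measurable_const.prodMk measurable_id)).aemeasurable
      _ = ∫⁻ p, (∫⁻ x, ENNReal.ofReal (Γ (t - p.1) p.2 ^ 2) * f p.1 (x - z - p.2) ∂η)
            ∂((volume.restrict (Ioo (0:ℝ) t)).prod volume) :=
          lintegral_lintegral_swap hmeas_big.aemeasurable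
      _ = ∫⁻ p, ENNReal.ofReal (Γ (t - p.1) p.2 ^ 2) * H p.1 (z + p.2)
            ∂((volume.restrict (Ioo (0:ℝ) t)).prod volume) := by
          refine lintegral_congr fun p => ?_
          have hfm : Measurable fun x : ℝ => f p.1 (x - z - p.2) := by
            exact hf.comp (measurable_const.prodMk
              ((measurable_id.sub measurable_const).sub measurable_const))
          rw [lintegral_const_mul _ hfm]
          congr 1
          simp only [hH]
          refine lintegral_congr fun x => ?_
          have harg : x - z - p.2 = x - (z + p.2) := by ring
          rw [harg]
      _ = P t z := by
          simp only [hP]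
          exact lintegral_prod
            (fun p : ℝ × ℝ => ENNReal.ofReal (Γ (t - p.1) p.2 ^ 2) * H p.1 (z + p.2))
            ((hg2.comp ((measurable_const.sub measurable_fst).prodMk
            measurable_snd)).mul (hHm.comp (measurable_fst.prodMk
            (measurable_const.add measurable_snd)))).aemeasurable
  -- Step 2 : reduce the supremum over ℝ to ℚ
  have hkkmeas : ∀ t : ℝ, Measurable ((Ioo (0:ℝ) t ×ˢ (univ : Set ℝ)).indicator
      (fun p : ℝ × ℝ => ENNReal.ofReal (Γ (t - p.1) p.2 ^ 2))) := fun t =>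
    (hg2.comp ((measurable_const.sub measurable_fst).prodMk measurable_snd)).indicator
      (measurableSet_Ioo.prod MeasurableSet.univ)
  have hconv : ∀ t z : ℝ, P t z = ∫⁻ p : ℝ × ℝ,
      (Ioo (0:ℝ) t ×ˢ (univ : Set ℝ)).indicator
        (fun p : ℝ × ℝ => ENNReal.ofReal (Γ (t - p.1) p.2 ^ 2)) p * H p.1 (p.2 + z) := by
    intro t z
    have hmul : ∀ p : ℝ × ℝ,
        (Ioo (0:ℝ) t ×ˢ (univ : Set ℝ)).indicator
          (fun p : ℝ × ℝ => ENNReal.ofReal (Γ (t - p.1) p.2 ^ 2)) p * H p.1 (p.2 + z)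
        = (Ioo (0:ℝ) t ×ˢ (univ : Set ℝ)).indicator
          (fun p : ℝ × ℝ => ENNReal.ofReal (Γ (t - p.1) p.2 ^ 2) * H p.1 (z + p.2)) p := by
      intro p
      by_cases hp : p ∈ Ioo (0:ℝ) t ×ˢ (univ : Set ℝ)
      · rw [Set.indicator_of_mem hp, Set.indicator_of_mem hp, add_comm p.2 z]
      · rw [Set.indicator_of_notMem hp, Set.indicator_of_notMem hp, zero_mul]
    have hprod : (volume.restrict (Ioo (0:ℝ) t)).prod volume
        = (volume : Measure (ℝ × ℝ)).restrict (Ioo (0:ℝ) t ×ˢ (univ : Set ℝ)) := by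
      have h1 := Measure.prod_restrict (μ := (volume : Measure ℝ))
        (ν := (volume : Measure ℝ)) (Ioo (0:ℝ) t) (univ : Set ℝ)
      rw [Measure.restrict_univ] at h1
      exact h1
    calc P t z = ∫⁻ p, ENNReal.ofReal (Γ (t - p.1) p.2 ^ 2) * H p.1 (z + p.2)
          ∂((volume.restrict (Ioo (0:ℝ) t)).prod volume) := by
            simp only [hP]
            exact (lintegral_prod
              (fun p : ℝ × ℝ => ENNReal.ofReal (Γ (t - p.1) p.2 ^ 2) * H p.1 (z + p.2))
              ((hg2.comp ((measurable_const.sub measurable_fst).prodMk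
              measurable_snd)).mul (hHm.comp (measurable_fst.prodMk
              (measurable_const.add measurable_snd)))).aemeasurable).symm
      _ = ∫⁻ p in Ioo (0:ℝ) t ×ˢ (univ : Set ℝ), ENNReal.ofReal (Γ (t - p.1) p.2 ^ 2)
            * H p.1 (z + p.2) ∂(volume : Measure (ℝ × ℝ)) := by rw [hprod]
      _ = ∫⁻ p : ℝ × ℝ, (Ioo (0:ℝ) t ×ˢ (univ : Set ℝ)).indicator
            (fun p : ℝ × ℝ => ENNReal.ofReal (Γ (t - p.1) p.2 ^ 2) * H p.1 (z + p.2)) p :=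
          (lintegral_indicator (measurableSet_Ioo.prod MeasurableSet.univ) _).symm
      _ = ∫⁻ p : ℝ × ℝ, (Ioo (0:ℝ) t ×ˢ (univ : Set ℝ)).indicator
            (fun p : ℝ × ℝ => ENNReal.ofReal (Γ (t - p.1) p.2 ^ 2)) p * H p.1 (p.2 + z) :=
          lintegral_congr fun p => (hmul p).symm
  have step2 : ∀ t : ℝ, (⨆ z : ℝ, P t z) ≤ ⨆ qq : ℚ, P t (qq : ℝ) := by
    intro t
    refine iSup_le fun z => ?_
    calc P t z = ∫⁻ p : ℝ × ℝ, (Ioo (0:ℝ) t ×ˢ (univ : Set ℝ)).indicator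
          (fun p : ℝ × ℝ => ENNReal.ofReal (Γ (t - p.1) p.2 ^ 2)) p * H p.1 (p.2 + z) :=
          hconv t z
      _ ≤ ⨆ qq : ℚ, ∫⁻ p : ℝ × ℝ, (Ioo (0:ℝ) t ×ˢ (univ : Set ℝ)).indicator
            (fun p : ℝ × ℝ => ENNReal.ofReal (Γ (t - p.1) p.2 ^ 2)) p
            * H p.1 (p.2 + (qq : ℝ)) :=
          my_cont_sup _ (fun p : ℝ × ℝ => H p.1 p.2) (hkkmeas t) hHm z
      _ ≤ ⨆ qq : ℚ, P t (qq : ℝ) := iSup_mono fun qq => le_of_eq (hconv t qq).symm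
  -- countable-sup majorant
  set Fh : ℝ → ℝ → ℝ≥0∞ := fun s w => ⨆ qq : ℚ, H s ((qq : ℝ) + w) with hFh
  have hFhm : Measurable fun p : ℝ × ℝ => Fh p.1 p.2 := by
    simp only [hFh]
    exact Measurable.iSup fun qq => hHm.comp (measurable_fst.prodMk
      (measurable_const.add measurable_snd))
  set Θ : ℝ × ℝ → ℝ≥0∞ := fun ts =>
    ∫⁻ w, ENNReal.ofReal (Γ (ts.1 - ts.2) w ^ 2) * Fh ts.2 w with hΘ
  have hΘm : Measurable Θ := by
    simp only [hΘ]
    exact Measurable.lintegral_prod_right'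
      ((hg2.comp ((measurable_fst.fst.sub measurable_fst.snd).prodMk measurable_snd)).mul
        (hFhm.comp (measurable_fst.snd.prodMk measurable_snd)))
  have hPbar : ∀ t : ℝ, (⨆ qq : ℚ, P t (qq : ℝ)) ≤ ∫⁻ s in Ioo (0:ℝ) t, Θ (t, s) := by
    intro t
    refine iSup_le fun qq => ?_
    simp only [hP, hΘ, hFh]
    refine lintegral_mono fun s => lintegral_mono fun w => mul_le_mul' le_rfl ?_
    exact le_iSup (fun qq' : ℚ => H s ((qq' : ℝ) + w)) qq
  set Ψ : ℝ × ℝ → ℝ≥0∞ := fun p => {q : ℝ × ℝ | q.2 < q.1}.indicator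
      (fun q => e q.1 * Θ q) p with hΨ
  have hΨm : Measurable Ψ := by
    simp only [hΨ]
    exact ((hemeas.comp measurable_fst).mul hΘm).indicator
      (measurableSet_lt measurable_snd measurable_fst)
  have hstep3 : ∀ t : ℝ, e t * ∫⁻ s in Ioo (0:ℝ) t, Θ (t, s)
      = ∫⁻ s in Ioi (0:ℝ), Ψ (t, s) := by
    intro t
    have hΘt : Measurable fun s : ℝ => Θ (t, s) := by
      exact hΘm.comp (measurable_const.prodMk measurable_id)
    rw [← lintegral_const_mul _ hΘt]
    have hmeq : (volume : Measure ℝ).restrict (Ioo (0:ℝ) t)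
        = ((volume : Measure ℝ).restrict (Ioi (0:ℝ))).restrict (Iio t) := by
      rw [Measure.restrict_restrict measurableSet_Iio, Set.inter_comm, Set.Ioi_inter_Iio]
    rw [hmeq, ← lintegral_indicator measurableSet_Iio]
    refine lintegral_congr fun s => ?_
    simp only [hΨ]
    by_cases hst : s < t
    · rw [Set.indicator_of_mem (show s ∈ Iio t from hst),
        Set.indicator_of_mem (show (t, s) ∈ {q : ℝ × ℝ | q.2 < q.1} from hst)]
    · rw [Set.indicator_of_notMem (show s ∉ Iio t from hst),
        Set.indicator_of_notMem (show (t, s) ∉ {q : ℝ × ℝ | q.2 < q.1} from hst)]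
  have hemul : ∀ u s : ℝ, e (u + s) = e u * e s := by
    intro u s
    simp only [he]
    rw [← ENNReal.ofReal_mul (exp_nonneg _)]
    congr 1
    rw [← Real.exp_add]
    congr 1
    ring
  set ρ : Measure (ℝ × ℝ) := (volume.restrict (Ioi (0:ℝ))).prod volume with hρ
  set kern : ℝ × ℝ → ℝ≥0∞ := fun p => e p.1 * ENNReal.ofReal (Γ p.1 p.2 ^ 2) with hkern
  have hkernm : Measurable kern := by
    simp only [hkern]
    exact (hemeas.comp measurable_fst).mul hg2
  have inner_eq : ∀ s : ℝ, s ∈ Ioi (0:ℝ) →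
      (∫⁻ t in Ioi (0:ℝ), Ψ (t, s)) = e s * ∫⁻ p, kern p * Fh s p.2 ∂ρ := by
    intro s hs
    have hmeas7 : ∀ u : ℝ, Measurable fun w : ℝ =>
        ENNReal.ofReal (Γ u w ^ 2) * Fh s w := fun u => by
      exact (hg2.comp (measurable_const.prodMk measurable_id)).mul
        (hFhm.comp (measurable_const.prodMk measurable_id))
    have hmeasuw : Measurable fun q : ℝ × ℝ =>
        ENNReal.ofReal (Γ q.1 q.2 ^ 2) * Fh s q.2 := by
      exact hg2.mul (hFhm.comp (measurable_const.prodMk measurable_snd))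
    have hmeas5 : Measurable fun u : ℝ =>
        e u * ∫⁻ w, ENNReal.ofReal (Γ u w ^ 2) * Fh s w := by
      exact hemeas.mul (Measurable.lintegral_prod_right' hmeasuw)
    have h1 : (∫⁻ t in Ioi (0:ℝ), Ψ (t, s))
        = ∫⁻ t in Ioi (0:ℝ), (Ioi s).indicator (fun t' => e t' * Θ (t', s)) t := by
      refine lintegral_congr fun t => ?_
      simp only [hΨ]
      by_cases hst : s < t
      · rw [Set.indicator_of_mem (show (t, s) ∈ {q : ℝ × ℝ | q.2 < q.1} from hst),
          Set.indicator_of_mem (show t ∈ Ioi s from hst)]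
      · rw [Set.indicator_of_notMem (show (t, s) ∉ {q : ℝ × ℝ | q.2 < q.1} from hst),
          Set.indicator_of_notMem (show t ∉ Ioi s from hst)]
    have h2 : (∫⁻ t in Ioi (0:ℝ), (Ioi s).indicator (fun t' => e t' * Θ (t', s)) t)
        = ∫⁻ t in Ioi s, e t * Θ (t, s) := by
      rw [lintegral_indicator measurableSet_Ioi, Measure.restrict_restrict measurableSet_Ioi,
        Set.inter_eq_self_of_subset_left (Ioi_subset_Ioi (le_of_lt hs))]
    have h3 : (∫⁻ t in Ioi s, e t * Θ (t, s))
        = ∫⁻ u in Ioi (0:ℝ), e (u + s) * Θ (u + s, s) :=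
      my_shift s (fun t => e t * Θ (t, s))
        (hemeas.mul (hΘm.comp (measurable_id.prodMk measurable_const)))
    have h4 : ∀ u : ℝ, Θ (u + s, s) = ∫⁻ w, ENNReal.ofReal (Γ u w ^ 2) * Fh s w := by
      intro u
      simp only [hΘ, add_sub_cancel_right]
    have h5 : (∫⁻ u in Ioi (0:ℝ), e (u + s) * Θ (u + s, s))
        = e s * ∫⁻ u in Ioi (0:ℝ), e u * ∫⁻ w, ENNReal.ofReal (Γ u w ^ 2) * Fh s w := by
      rw [← lintegral_const_mul _ hmeas5]
      refine lintegral_congr fun u => ?_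
      rw [hemul u s, h4 u]
      ring
    have h6 : (∫⁻ p, kern p * Fh s p.2 ∂ρ)
        = ∫⁻ u in Ioi (0:ℝ), e u * ∫⁻ w, ENNReal.ofReal (Γ u w ^ 2) * Fh s w := by
      simp only [hρ, hkern]
      rw [lintegral_prod (fun p : ℝ × ℝ => (e p.1 * ENNReal.ofReal (Γ p.1 p.2 ^ 2)) * Fh s p.2)
        (((hemeas.comp measurable_fst).mul hg2).mul (hFhm.comp
        (measurable_const.prodMk measurable_snd))).aemeasurable]
      refine lintegral_congr fun u => ?_
      rw [← lintegral_const_mul _ (hmeas7 u)]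
      refine lintegral_congr fun w => ?_
      ring
    rw [h1, h2, h3, h5, h6]
  have key := my_key_final ρ kern hkernm (fun s p => Fh s p.2)
      (hFhm.comp (measurable_fst.prodMk measurable_snd.snd))
      (fun s => ⨆ v : ℝ, H s v)
      (fun s p => by
        simp only [hFh]
        exact iSup_le fun qq => le_iSup (fun v : ℝ => H s v) ((qq : ℝ) + p.2))
      e hemeas
  have hC : (∫⁻ p, kern p ∂ρ) = ∫⁻ t in Ioi (0:ℝ), ENNReal.ofReal (exp (-β * t)) *
      ∫⁻ y, ENNReal.ofReal ((Γ t y) ^ 2) := by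
    simp only [hρ, hkern]
    rw [lintegral_prod (fun p : ℝ × ℝ => e p.1 * ENNReal.ofReal (Γ p.1 p.2 ^ 2))
      ((hemeas.comp measurable_fst).mul hg2).aemeasurable]
    refine lintegral_congr fun u => ?_
    have hgm : Measurable fun y : ℝ => ENNReal.ofReal (Γ u y ^ 2) := by
      exact hg2.comp (measurable_const.prodMk measurable_id)
    show (∫⁻ y, e u * ENNReal.ofReal (Γ u y ^ 2))
        = ENNReal.ofReal (exp (-β * u)) * ∫⁻ y, ENNReal.ofReal ((Γ u y) ^ 2)
    rw [lintegral_const_mul _ hgm]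
  calc ∫⁻ t in Ioi (0 : ℝ), ENNReal.ofReal (exp (-β * t)) *
        ⨆ z : ℝ, ∫⁻ x, (∫⁻ s in Ioo (0 : ℝ) t, ∫⁻ y,
          ENNReal.ofReal ((Γ (t - s) (x - z - y)) ^ 2) * f s y) ∂η
      = ∫⁻ t in Ioi (0:ℝ), e t * ⨆ z : ℝ, P t z := by
        refine lintegral_congr fun t => ?_
        simp only [he]
        congr 1
        exact iSup_congr fun z => step1 t z
    _ ≤ ∫⁻ t in Ioi (0:ℝ), e t * ⨆ qq : ℚ, P t (qq : ℝ) :=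
        lintegral_mono fun t => mul_le_mul' le_rfl (step2 t)
    _ ≤ ∫⁻ t in Ioi (0:ℝ), e t * ∫⁻ s in Ioo (0:ℝ) t, Θ (t, s) :=
        lintegral_mono fun t => mul_le_mul' le_rfl (hPbar t)
    _ = ∫⁻ t in Ioi (0:ℝ), ∫⁻ s in Ioi (0:ℝ), Ψ (t, s) :=
        lintegral_congr fun t => hstep3 t
    _ = ∫⁻ s in Ioi (0:ℝ), ∫⁻ t in Ioi (0:ℝ), Ψ (t, s) :=
        lintegral_lintegral_swap (f := fun t s => Ψ (t, s)) hΨm.aemeasurable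
    _ = ∫⁻ s in Ioi (0:ℝ), e s * ∫⁻ p, kern p * Fh s p.2 ∂ρ :=
        setLIntegral_congr_fun measurableSet_Ioi inner_eq
    _ ≤ (∫⁻ p, kern p ∂ρ) * ∫⁻ s in Ioi (0:ℝ), e s * ⨆ v : ℝ, H s v := key
    _ = (∫⁻ t in Ioi (0 : ℝ), ENNReal.ofReal (exp (-β * t)) *
            ∫⁻ y, ENNReal.ofReal ((Γ t y) ^ 2)) *
        (∫⁻ s in Ioi (0 : ℝ), ENNReal.ofReal (exp (-β * s)) *
            ⨆ v : ℝ, ∫⁻ x, f s (x - v) ∂η) := by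
        rw [hC]
end

section
/- Let Ψ: ℝ → ℂ be measurable with Re Ψ(ξ) ≥ 0 for all ξ ∈ ℝ, and for β > 0 set Υ(β) := (1/2π) ∫_ℝ dξ/(β + 2 Re Ψ(ξ)). If Υ(β) < ∞ for some β > 0, then for every t > 0 the function ξ ↦ e^{−2t Re Ψ(ξ)} is Lebesgue integrable on ℝ, with the quantitative bound ∫_ℝ e^{−2t Re Ψ(ξ)} dξ ≤ 2π (β + 1/(e t)) Υ(β). -/
open MeasureTheory Real Set
open scoped ENNReal

/-- Dalang's integral `Υ(β) := (1/2π) ∫_ℝ dξ / (β + 2 Re Ψ(ξ))` associated with a Lévy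
exponent `Ψ`, with values in `[0,∞]`. -/
noncomputable def Upsilon (Ψ : ℝ → ℂ) (β : ℝ) : ℝ≥0∞ :=
  (ENNReal.ofReal (2 * π))⁻¹ * ∫⁻ ξ : ℝ, (ENNReal.ofReal (β + 2 * (Ψ ξ).re))⁻¹

lemma key_ineq (β t r : ℝ) (hβ : 0 < β) (ht : 0 < t) (hr : 0 ≤ r) :
    exp (-2 * t * r) * (β + 2 * r) ≤ β + 1 / (exp 1 * t) := by
  have hE : (0:ℝ) < exp (2 * t * r) := Real.exp_pos _
  have h1 : 2 * t * r * exp 1 ≤ exp (2 * t * r) := by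
    have h := Real.add_one_le_exp (2 * t * r - 1)
    have h2 : 2 * t * r ≤ exp (2 * t * r - 1) := by linarith
    calc 2 * t * r * exp 1 ≤ exp (2 * t * r - 1) * exp 1 := by
          have := Real.exp_pos 1; nlinarith
      _ = exp (2 * t * r) := by rw [← Real.exp_add]; ring_nf
  have hneg : exp (-2 * t * r) = (exp (2 * t * r))⁻¹ := by
    rw [← Real.exp_neg]; ring_nf
  have h2 : exp (-2 * t * r) ≤ 1 := by
    rw [Real.exp_le_one_iff]; nlinarith
  have h3 : 2 * r * exp (-2 * t * r) ≤ 1 / (exp 1 * t) := by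
    rw [hneg]
    have het : 0 < exp 1 * t := by positivity
    rw [div_eq_inv_mul, mul_inv_le_iff₀ hE]
    rw [mul_one, inv_mul_eq_div, le_div_iff₀ het]
    nlinarith
  nlinarith

/-- If `Re Ψ ≥ 0` and Dalang's integral `Υ(β)` is finite for some `β > 0`, then for every
`t > 0` the function `ξ ↦ e^{−2t Re Ψ(ξ)}` is Lebesgue integrable on `ℝ`, with the
quantitative bound `∫_ℝ e^{−2t Re Ψ(ξ)} dξ ≤ 2π (β + 1/(e t)) Υ(β)`. -/
theorem exp_re_psi_integrable (Ψ : ℝ → ℂ) (hΨ : Measurable Ψ)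
    (hre : ∀ ξ : ℝ, 0 ≤ (Ψ ξ).re)
    (β : ℝ) (hβ : 0 < β) (hfin : Upsilon Ψ β < ⊤)
    (t : ℝ) (ht : 0 < t) :
    Integrable (fun ξ : ℝ => exp (-2 * t * (Ψ ξ).re)) ∧
    ∫⁻ ξ : ℝ, ENNReal.ofReal (exp (-2 * t * (Ψ ξ).re)) ≤
      ENNReal.ofReal (2 * π * (β + 1 / (exp 1 * t))) * Upsilon Ψ β := by
  rw [Upsilon] at hfin ⊢
  set c : ℝ≥0∞ := ENNReal.ofReal (β + 1 / (exp 1 * t)) with hc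
  set I : ℝ≥0∞ := ∫⁻ ξ : ℝ, (ENNReal.ofReal (β + 2 * (Ψ ξ).re))⁻¹ with hI
  have hIfin : I < ⊤ := by
    by_contra h
    rw [not_lt, top_le_iff] at h
    rw [h, ENNReal.mul_top] at hfin
    · exact absurd hfin (by simp)
    · simp [ENNReal.inv_ne_zero, ENNReal.ofReal_ne_top, ENNReal.mul_eq_top]
  have hpt : ∀ ξ : ℝ, ENNReal.ofReal (exp (-2 * t * (Ψ ξ).re)) ≤
      c * (ENNReal.ofReal (β + 2 * (Ψ ξ).re))⁻¹ := by
    intro ξ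
    have hr := hre ξ
    have hd : 0 < β + 2 * (Ψ ξ).re := by linarith
    have hkey := key_ineq β t (Ψ ξ).re hβ ht hr
    have hreal : exp (-2 * t * (Ψ ξ).re) ≤ (β + 1 / (exp 1 * t)) / (β + 2 * (Ψ ξ).re) :=
      (le_div_iff₀ hd).mpr hkey
    calc ENNReal.ofReal (exp (-2 * t * (Ψ ξ).re))
        ≤ ENNReal.ofReal ((β + 1 / (exp 1 * t)) / (β + 2 * (Ψ ξ).re)) :=
          ENNReal.ofReal_le_ofReal hreal
      _ = c * (ENNReal.ofReal (β + 2 * (Ψ ξ).re))⁻¹ := by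
          rw [ENNReal.ofReal_div_of_pos hd, div_eq_mul_inv]
  have hbound : ∫⁻ ξ : ℝ, ENNReal.ofReal (exp (-2 * t * (Ψ ξ).re)) ≤ c * I := by
    calc ∫⁻ ξ : ℝ, ENNReal.ofReal (exp (-2 * t * (Ψ ξ).re))
        ≤ ∫⁻ ξ : ℝ, c * (ENNReal.ofReal (β + 2 * (Ψ ξ).re))⁻¹ := lintegral_mono hpt
      _ = c * I := lintegral_const_mul' c _ ENNReal.ofReal_ne_top
  have hRHS : ENNReal.ofReal (2 * π * (β + 1 / (exp 1 * t))) *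
      ((ENNReal.ofReal (2 * π))⁻¹ * I) = c * I := by
    have h2π : (0:ℝ) < 2 * π := by positivity
    rw [ENNReal.ofReal_mul h2π.le]
    rw [mul_comm (ENNReal.ofReal (2 * π)) c, mul_assoc, ← mul_assoc (ENNReal.ofReal (2 * π)),
      ENNReal.mul_inv_cancel (by simp [ENNReal.ofReal_pos, h2π, Real.pi_pos]) ENNReal.ofReal_ne_top, one_mul]
  have hmeas : Measurable fun ξ : ℝ => exp (-2 * t * (Ψ ξ).re) :=
    (Real.measurable_exp).comp ((measurable_const.mul (Complex.measurable_re.comp hΨ)))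
  constructor
  · refine ⟨hmeas.aestronglyMeasurable, ?_⟩
    rw [hasFiniteIntegral_iff_ofReal (Filter.Eventually.of_forall fun ξ => (Real.exp_pos _).le)]
    exact lt_of_le_of_lt hbound (ENNReal.mul_lt_top ENNReal.ofReal_lt_top hIfin)
  · rw [hRHS]; exact hbound
end
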